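/- Let μ be the Bernoulli product probability measure on ℝ^ℕ, namely the countable product over n ∈ ℕ of the measure (δ₋₁ + δ₁)/2 on ℝ (so the coordinates are independent random variables taking the values ±1 with probability 1/2 each). Then for a sequence f : ℕ → ℝ, the partial sums S_N(x) = Σ_{n < N} f(n)·x(n) converge (to a finite limit) for μ-almost every x ∈ ℝ^ℕ if and only if Σ_n f(n)² < ∞, i.e., if and only if f ∈ ℓ². Thus the linear measurable functionals on (ℝ^ℕ, μ) given by coordinate series are exactly those with coefficient sequence in ℓ². -/

import Mathlib

open MeasureTheory Filter Topology ENNReal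

section BernoulliAux

set_option linter.unusedSectionVars false
set_option maxHeartbeats 1000000

variable {μ : Measure (ℕ → ℝ)} [IsProbabilityMeasure μ]




lemma integrable_dirac' {g : ℝ → ℝ} (hg : Measurable g) (a : ℝ) :
    Integrable g (Measure.dirac a) := by
  refine ⟨hg.aestronglyMeasurable, ?_⟩
  rw [HasFiniteIntegral, lintegral_dirac' _ (by measurability)]
  exact coe_lt_top

lemma bern_ae_pm (hdist : ∀ n : ℕ, Measure.map (fun x : ℕ → ℝ => x n) μ
      = (2⁻¹ : ℝ≥0∞) • (Measure.dirac (-1 : ℝ) + Measure.dirac (1 : ℝ))) :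
    ∀ᵐ x ∂μ, ∀ n, x n = 1 ∨ x n = -1 := by
  rw [ae_all_iff]
  intro n
  have hmeas : Measurable (fun x : ℕ → ℝ => x n) := measurable_pi_apply n
  have hset : MeasurableSet {y : ℝ | ¬(y = 1 ∨ y = -1)} := by
    simp only [not_or, Set.setOf_and]
    exact ((MeasurableSet.singleton 1).compl).inter ((MeasurableSet.singleton (-1)).compl)
  have : μ {x | ¬(x n = 1 ∨ x n = -1)} =
      (Measure.map (fun x : ℕ → ℝ => x n) μ) {y | ¬(y = 1 ∨ y = -1)} := by
    rw [Measure.map_apply hmeas hset]; rfl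
  rw [ae_iff]
  simp only [not_or] at this ⊢
  rw [this, hdist n]
  have h1 : (Measure.dirac (-1:ℝ)) {y : ℝ | ¬y = 1 ∧ ¬y = -1} = 0 := by
    rw [Measure.dirac_apply' _ (by simpa [not_or] using hset)]
    simp
  have h2 : (Measure.dirac (1:ℝ)) {y : ℝ | ¬y = 1 ∧ ¬y = -1} = 0 := by
    rw [Measure.dirac_apply' _ (by simpa [not_or] using hset)]
    simp
  simp [h1, h2]

lemma bern_integral_comp (hdist : ∀ n : ℕ, Measure.map (fun x : ℕ → ℝ => x n) μ
      = (2⁻¹ : ℝ≥0∞) • (Measure.dirac (-1 : ℝ) + Measure.dirac (1 : ℝ)))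
    (n : ℕ) {g : ℝ → ℝ} (hg : Measurable g) :
    ∫ x, g (x n) ∂μ = (g (-1) + g 1) / 2 := by
  rw [← integral_map (measurable_pi_apply n).aemeasurable hg.aestronglyMeasurable, hdist n,
    integral_smul_measure,
    integral_add_measure (integrable_dirac' hg _) (integrable_dirac' hg _),
    integral_dirac' _ _ hg.stronglyMeasurable, integral_dirac' _ _ hg.stronglyMeasurable]
  simp [ENNReal.toReal_inv]
  ring



lemma bern_meas_SN (f : ℕ → ℝ) (N : ℕ) :
    Measurable (fun x : ℕ → ℝ => ∑ n ∈ Finset.range N, f n * x n) := by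
  apply Finset.measurable_sum
  exact fun n _ => by fun_prop

lemma bern_indep_partial
    (hIndep : ProbabilityTheory.iIndepFun
      (fun n => fun x : ℕ → ℝ => x n) μ) (f : ℕ → ℝ) (N : ℕ)
    {g : ℝ → ℝ} (hg : Measurable g) :
    ProbabilityTheory.IndepFun
      (fun x : ℕ → ℝ => g (∑ n ∈ Finset.range N, f n * x n))
      (fun x : ℕ → ℝ => x N) μ := by
  have h := ProbabilityTheory.iIndepFun.indepFun_finset (Finset.range N) {N}
    (by simp) hIndep (fun n => measurable_pi_apply n)
  have hφ : Measurable (fun v : {i // i ∈ Finset.range N} → ℝ =>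
      g (∑ i : {i // i ∈ Finset.range N}, f i.1 * v i)) := by
    apply hg.comp
    apply Finset.measurable_sum
    exact fun i _ => by fun_prop
  have hψ : Measurable (fun w : {i // i ∈ ({N} : Finset ℕ)} → ℝ =>
      w ⟨N, by simp⟩) := measurable_pi_apply _
  have h2 := h.comp hφ hψ
  convert h2 using 1
  funext x
  simp only [Function.comp]
  congr 1
  rw [← Finset.sum_coe_sort (Finset.range N) (fun n => f n * x n)]
  rfl

lemma bern_integrable_bdd {h : (ℕ → ℝ) → ℝ} (hm : AEStronglyMeasurable h μ)
    {C : ℝ} (hb : ∀ᵐ x ∂μ, |h x| ≤ C) : Integrable h μ :=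
  Integrable.mono' (integrable_const C) hm (by simpa [Real.norm_eq_abs] using hb)

lemma bern_integral_coord (hdist : ∀ n : ℕ, Measure.map (fun x : ℕ → ℝ => x n) μ
      = (2⁻¹ : ℝ≥0∞) • (Measure.dirac (-1 : ℝ) + Measure.dirac (1 : ℝ)))
    (n : ℕ) : ∫ x, x n ∂μ = 0 := by
  have := bern_integral_comp (μ := μ) hdist n (g := id) measurable_id
  simpa using this

lemma bern_integrable_coord (hdist : ∀ n : ℕ, Measure.map (fun x : ℕ → ℝ => x n) μ
      = (2⁻¹ : ℝ≥0∞) • (Measure.dirac (-1 : ℝ) + Measure.dirac (1 : ℝ)))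
    (n : ℕ) : Integrable (fun x : ℕ → ℝ => x n) μ := by
  apply bern_integrable_bdd (measurable_pi_apply n).aestronglyMeasurable (C := 1)
  filter_upwards [bern_ae_pm hdist] with x hx
  rcases hx n with h | h <;> simp [h]

lemma bern_char (hIndep : ProbabilityTheory.iIndepFun
      (fun n => fun x : ℕ → ℝ => x n) μ)
    (hdist : ∀ n : ℕ, Measure.map (fun x : ℕ → ℝ => x n) μ
      = (2⁻¹ : ℝ≥0∞) • (Measure.dirac (-1 : ℝ) + Measure.dirac (1 : ℝ)))
    (f : ℕ → ℝ) (t : ℝ) : ∀ N : ℕ,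
    (∫ x, Real.cos (t * ∑ n ∈ Finset.range N, f n * x n) ∂μ
        = ∏ n ∈ Finset.range N, Real.cos (t * f n))
    ∧ (∫ x, Real.sin (t * ∑ n ∈ Finset.range N, f n * x n) ∂μ = 0) := by
  intro N
  induction N with
  | zero => simp
  | succ N ih =>
    set S : (ℕ → ℝ) → ℝ := fun x => ∑ n ∈ Finset.range N, f n * x n with hS
    have hSm : Measurable S := bern_meas_SN f N
    set c : ℝ := Real.cos (t * f N)
    set s : ℝ := Real.sin (t * f N)
    -- integrability of all pieces
    have hcosm : Measurable (fun x => Real.cos (t * S x)) :=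
      (Real.measurable_cos.comp (hSm.const_mul t))
    have hsinm : Measurable (fun x => Real.sin (t * S x)) :=
      (Real.measurable_sin.comp (hSm.const_mul t))
    have hcosi : Integrable (fun x => Real.cos (t * S x)) μ :=
      bern_integrable_bdd hcosm.aestronglyMeasurable (C := 1)
        (Filter.Eventually.of_forall fun x => Real.abs_cos_le_one _)
    have hsini : Integrable (fun x => Real.sin (t * S x)) μ :=
      bern_integrable_bdd hsinm.aestronglyMeasurable (C := 1)
        (Filter.Eventually.of_forall fun x => Real.abs_sin_le_one _)
    have hXi : Integrable (fun x : ℕ → ℝ => x N) μ := bern_integrable_coord hdist N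
    have hindc : ProbabilityTheory.IndepFun (fun x => Real.cos (t * S x))
        (fun x : ℕ → ℝ => x N) μ :=
      bern_indep_partial hIndep f N (Real.measurable_cos.comp (measurable_id.const_mul t))
    have hinds : ProbabilityTheory.IndepFun (fun x => Real.sin (t * S x))
        (fun x : ℕ → ℝ => x N) μ :=
      bern_indep_partial hIndep f N (Real.measurable_sin.comp (measurable_id.const_mul t))
    have hIc : ∫ x, Real.cos (t * S x) * x N ∂μ = 0 := by
      rw [hindc.integral_fun_mul_eq_mul_integral hcosi.1 hXi.1, bern_integral_coord hdist, mul_zero]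
    have hIs : ∫ x, Real.sin (t * S x) * x N ∂μ = 0 := by
      rw [hinds.integral_fun_mul_eq_mul_integral hsini.1 hXi.1, bern_integral_coord hdist, mul_zero]
    have hmulsi : Integrable (fun x => Real.sin (t * S x) * x N) μ := by
      apply bern_integrable_bdd (hsinm.mul (measurable_pi_apply N)).aestronglyMeasurable (C := 1)
      filter_upwards [bern_ae_pm hdist] with x hx
      rcases hx N with h | h <;>
        simp [h, abs_mul, Real.abs_sin_le_one]
    have hmulci : Integrable (fun x => Real.cos (t * S x) * x N) μ := by
      apply bern_integrable_bdd (hcosm.mul (measurable_pi_apply N)).aestronglyMeasurable (C := 1)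
      filter_upwards [bern_ae_pm hdist] with x hx
      rcases hx N with h | h <;>
        simp [h, abs_mul, Real.abs_cos_le_one]
    have hsplit : ∀ᵐ x ∂μ,
        (Real.cos (t * ∑ n ∈ Finset.range (N+1), f n * x n)
          = Real.cos (t * S x) * c - Real.sin (t * S x) * x N * s)
        ∧ (Real.sin (t * ∑ n ∈ Finset.range (N+1), f n * x n)
          = Real.sin (t * S x) * c + Real.cos (t * S x) * x N * s) := by
      filter_upwards [bern_ae_pm hdist] with x hx
      have hsum : t * ∑ n ∈ Finset.range (N+1), f n * x n
          = t * S x + t * (f N * x N) := by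
        rw [Finset.sum_range_succ, mul_add]
      rcases hx N with h | h
      · rw [hsum, h, mul_one, Real.cos_add, Real.sin_add]
        constructor <;> ring
      · rw [hsum, h]
        have h1 : t * (f N * (-1 : ℝ)) = -(t * f N) := by ring
        rw [h1, Real.cos_add, Real.sin_add, Real.cos_neg, Real.sin_neg]
        constructor <;> ring
    constructor
    · calc ∫ x, Real.cos (t * ∑ n ∈ Finset.range (N+1), f n * x n) ∂μ
          = ∫ x, (Real.cos (t * S x) * c - Real.sin (t * S x) * x N * s) ∂μ :=
            integral_congr_ae (hsplit.mono fun x h => h.1)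
        _ = (∫ x, Real.cos (t * S x) ∂μ) * c
              - (∫ x, Real.sin (t * S x) * x N ∂μ) * s := by
            rw [integral_sub (hcosi.mul_const c) (hmulsi.mul_const s),
              integral_mul_const, integral_mul_const]
        _ = ∏ n ∈ Finset.range (N+1), Real.cos (t * f n) := by
            rw [ih.1, hIs, Finset.prod_range_succ]; ring
    · calc ∫ x, Real.sin (t * ∑ n ∈ Finset.range (N+1), f n * x n) ∂μ
          = ∫ x, (Real.sin (t * S x) * c + Real.cos (t * S x) * x N * s) ∂μ :=
            integral_congr_ae (hsplit.mono fun x h => h.2)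
        _ = (∫ x, Real.sin (t * S x) ∂μ) * c
              + (∫ x, Real.cos (t * S x) * x N ∂μ) * s := by
            rw [integral_add (hsini.mul_const c) (hmulci.mul_const s),
              integral_mul_const, integral_mul_const]
        _ = 0 := by rw [ih.2, hIc]; ring

lemma bern_summable_of_ae_conv
    (hIndep : ProbabilityTheory.iIndepFun
      (fun n => fun x : ℕ → ℝ => x n) μ)
    (hdist : ∀ n : ℕ, Measure.map (fun x : ℕ → ℝ => x n) μ
      = (2⁻¹ : ℝ≥0∞) • (Measure.dirac (-1 : ℝ) + Measure.dirac (1 : ℝ)))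
    (f : ℕ → ℝ)
    (h : ∀ᵐ x ∂μ, ∃ L : ℝ,
        Tendsto (fun N : ℕ => ∑ n ∈ Finset.range N, f n * x n) atTop (𝓝 L)) :
    Summable (fun n => f n ^ 2) := by
  classical
  set S : ℕ → (ℕ → ℝ) → ℝ := fun N x => ∑ n ∈ Finset.range N, f n * x n with hSdef
  have hSm : ∀ N, Measurable (S N) := fun N => bern_meas_SN f N
  set g : (ℕ → ℝ) → ℝ := fun x => limUnder atTop (fun N => S N x) with hgdef
  have hg : ∀ᵐ x ∂μ, Tendsto (fun N => S N x) atTop (𝓝 (g x)) := by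
    filter_upwards [h] with x hx
    obtain ⟨L, hL⟩ := hx
    have : g x = L := hL.limUnder_eq
    rw [this]; exact hL
  have hgm : AEStronglyMeasurable g μ :=
    aestronglyMeasurable_of_tendsto_ae atTop (fun N => (hSm N).aestronglyMeasurable) hg
  -- the limiting "characteristic function"
  set C : ℝ → ℝ := fun t => ∫ x, Real.cos (t * g x) ∂μ with hCdef
  have hconv : ∀ t : ℝ, Tendsto (fun N => ∏ n ∈ Finset.range N, Real.cos (t * f n))
      atTop (𝓝 (C t)) := by
    intro t
    have : Tendsto (fun N => ∫ x, Real.cos (t * S N x) ∂μ) atTop (𝓝 (C t)) := by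
      apply tendsto_integral_of_dominated_convergence (fun _ => (1 : ℝ))
      · exact fun N => (Real.measurable_cos.comp ((hSm N).const_mul t)).aestronglyMeasurable
      · exact integrable_const 1
      · exact fun N => Filter.Eventually.of_forall fun x => by
          simpa [Real.norm_eq_abs] using Real.abs_cos_le_one (t * S N x)
      · filter_upwards [hg] with x hx
        exact (Real.continuous_cos.tendsto _).comp (hx.const_mul t)
    have heq : (fun N => ∫ x, Real.cos (t * S N x) ∂μ)
        = fun N => ∏ n ∈ Finset.range N, Real.cos (t * f n) := by
      funext N; exact (bern_char hIndep hdist f t N).1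
    rwa [heq] at this
  -- continuity of C at 0 along sequences, giving a δ with C ≥ 1/2 near 0
  have hseq : ∀ (u : ℕ → ℝ), Tendsto u atTop (𝓝 0) → Tendsto (fun k => C (u k)) atTop (𝓝 1) := by
    intro u hu
    have h1 : (1 : ℝ) = ∫ _x, (1 : ℝ) ∂μ := by simp
    rw [h1]
    apply tendsto_integral_of_dominated_convergence (fun _ => (1 : ℝ))
    · intro k
      exact Real.continuous_cos.comp_aestronglyMeasurable (hgm.const_mul (u k))
    · exact integrable_const 1
    · exact fun k => Filter.Eventually.of_forall fun x => by
        simpa [Real.norm_eq_abs] using Real.abs_cos_le_one _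
    · filter_upwards [] with x
      have : Tendsto (fun k => u k * g x) atTop (𝓝 0) := by
        simpa using hu.mul_const (g x)
      have := (Real.continuous_cos.tendsto 0).comp this
      simpa [Function.comp_def] using this
  have hδ : ∃ δ : ℝ, 0 < δ ∧ ∀ t : ℝ, |t| ≤ δ → 1/2 ≤ C t := by
    by_contra hcon
    push_neg at hcon
    have hpick : ∀ k : ℕ, ∃ t : ℝ, |t| ≤ 1/(k+1) ∧ C t < 1/2 := by
      intro k
      obtain ⟨t, ht, hct⟩ := hcon (1/(k+1)) (by positivity)
      exact ⟨t, ht, hct⟩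
    choose u hu1 hu2 using hpick
    have hu0 : Tendsto u atTop (𝓝 0) := by
      have hb : Tendsto (fun k : ℕ => 1/((k : ℝ)+1)) atTop (𝓝 0) :=
        tendsto_one_div_add_atTop_nhds_zero_nat
      apply squeeze_zero_norm (fun k => by simpa [Real.norm_eq_abs] using hu1 k) hb
    have := hseq u hu0
    have hev : ∀ᶠ k in atTop, (1/2 : ℝ) ≤ C (u k) := by
      exact this.eventually (eventually_ge_nhds (by norm_num : (1/2:ℝ) < 1))
    obtain ⟨k, hk⟩ := hev.exists
    exact absurd (hu2 k) (not_lt.2 hk)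
  obtain ⟨δ, hδ0, hδC⟩ := hδ
  -- partial products of cos² are bounded below by 1/4 for |t| ≤ δ
  have hprod : ∀ t : ℝ, |t| ≤ δ → ∀ N : ℕ,
      (1/4 : ℝ) ≤ ∏ n ∈ Finset.range N, Real.cos (t * f n) ^ 2 := by
    intro t ht N
    have hP : Tendsto (fun N => ∏ n ∈ Finset.range N, Real.cos (t * f n) ^ 2)
        atTop (𝓝 (C t ^ 2)) := by
      have := (hconv t).pow 2
      simpa [Finset.prod_pow] using this
    have hanti : Antitone (fun N => ∏ n ∈ Finset.range N, Real.cos (t * f n) ^ 2) := by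
      apply antitone_nat_of_succ_le
      intro n
      rw [Finset.prod_range_succ]
      have hnn : (0:ℝ) ≤ ∏ k ∈ Finset.range n, Real.cos (t * f k) ^ 2 :=
        Finset.prod_nonneg fun k _ => sq_nonneg _
      nlinarith [Real.cos_sq_le_one (t * f n), sq_nonneg (Real.cos (t * f n))]
    have hlim : (1/4 : ℝ) ≤ C t ^ 2 := by
      have := hδC t ht
      nlinarith
    exact le_trans hlim (hanti.le_of_tendsto hP N)
  -- coefficient bound : |δ * f n| ≤ π / 3
  have hfb : ∀ n : ℕ, |δ * f n| ≤ Real.pi / 3 := by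
    intro n
    by_contra hcon
    push_neg at hcon
    have hfn : f n ≠ 0 := by
      intro h0
      rw [h0] at hcon
      simp at hcon
      nlinarith [Real.pi_pos]
    set u : ℝ := min (δ * |f n|) (Real.pi / 2) with hu
    have hδf : Real.pi / 3 < δ * |f n| := by
      rwa [abs_mul, abs_of_pos hδ0] at hcon
    have hu1 : Real.pi / 3 < u := lt_min hδf (by nlinarith [Real.pi_pos])
    have hu2 : u ≤ Real.pi / 2 := min_le_right _ _
    have hu0 : 0 < u := lt_trans (by positivity) hu1
    set t : ℝ := u / |f n| with htdef
    have ht0 : 0 < t := div_pos hu0 (abs_pos.2 hfn)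
    have htδ : |t| ≤ δ := by
      rw [abs_of_pos ht0, htdef, div_le_iff₀ (abs_pos.2 hfn)]
      exact min_le_left _ _
    have htf : |t * f n| = u := by
      rw [abs_mul, abs_of_pos ht0, htdef, div_mul_cancel₀]
      exact ne_of_gt (abs_pos.2 hfn)
    have hcos : Real.cos (t * f n) ^ 2 = Real.cos u ^ 2 := by
      rw [← Real.cos_abs (t * f n), htf]
    have hcosu : Real.cos u < 1/2 := by
      have h13 : Real.cos (Real.pi / 3) = 1/2 := by
        rw [Real.cos_pi_div_three]
      rw [← h13]
      apply Real.cos_lt_cos_of_nonneg_of_le_pi (by positivity)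
        (by nlinarith [Real.pi_pos]) hu1
    have hcosnn : 0 ≤ Real.cos u :=
      Real.cos_nonneg_of_mem_Icc ⟨by nlinarith [Real.pi_pos], hu2⟩
    have hlt : Real.cos (t * f n) ^ 2 < 1/4 := by
      rw [hcos]; nlinarith
    have hge : (1/4 : ℝ) ≤ Real.cos (t * f n) ^ 2 := by
      have h4 := hprod t htδ (n+1)
      calc (1/4 : ℝ) ≤ ∏ k ∈ Finset.range (n+1), Real.cos (t * f k) ^ 2 := h4
        _ ≤ Real.cos (t * f n) ^ 2 := by
            rw [Finset.prod_range_succ]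
            have h1 : ∏ k ∈ Finset.range n, Real.cos (t * f k) ^ 2 ≤ 1 :=
              Finset.prod_le_one (fun k _ => sq_nonneg _)
                (fun k _ => Real.cos_sq_le_one _)
            nlinarith [sq_nonneg (Real.cos (t * f n)),
              Finset.prod_nonneg (fun k (_ : k ∈ Finset.range n) => sq_nonneg (Real.cos (t * f k)))]
    linarith
  -- now evaluate at t₀ := 3δ/π where |t₀ * f n| ≤ 1
  set t₀ : ℝ := δ * (3 / Real.pi) with ht₀
  have hπ : 0 < Real.pi := Real.pi_pos
  have ht₀0 : 0 < t₀ := by positivity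
  have ht₀δ : |t₀| ≤ δ := by
    rw [abs_of_pos ht₀0, ht₀]
    have h31 : 3 / Real.pi ≤ 1 := (div_le_one hπ).2 (by linarith [Real.pi_gt_three])
    nlinarith
  have ht₀f : ∀ n, |t₀ * f n| ≤ 1 := by
    intro n
    have hb := hfb n
    have h1 : |t₀ * f n| = (δ * |f n|) * (3 / Real.pi) := by
      rw [ht₀, abs_mul, abs_of_pos (by positivity : (0:ℝ) < δ * (3 / Real.pi))]
      ring
    have h2 : δ * |f n| ≤ Real.pi / 3 := by
      rwa [abs_mul, abs_of_pos hδ0] at hb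
    rw [h1]
    calc (δ * |f n|) * (3 / Real.pi) ≤ (Real.pi / 3) * (3 / Real.pi) :=
          mul_le_mul_of_nonneg_right h2 (by positivity)
      _ = 1 := by field_simp
  -- sin² lower bound and summability
  have hsin : ∀ n : ℕ, (9/16 : ℝ) * (t₀ * f n) ^ 2 ≤ Real.sin (t₀ * f n) ^ 2 := by
    intro n
    set v : ℝ := |t₀ * f n| with hv
    have hv1 : v ≤ 1 := ht₀f n
    have hv0 : 0 ≤ v := abs_nonneg _
    have hsq : Real.sin (t₀ * f n) ^ 2 = Real.sin v ^ 2 := by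
      rcases abs_choice (t₀ * f n) with h | h
      · rw [← h]
      · rw [hv, h, Real.sin_neg]; ring
    rcases eq_or_lt_of_le hv0 with h0 | h0
    · have : t₀ * f n = 0 := abs_eq_zero.1 h0.symm
      simp [this]
    · have := Real.sin_gt_sub_cube h0
      have hval : v ^ 3 ≤ v := by
        nlinarith [mul_nonneg (mul_nonneg h0.le (by linarith : (0:ℝ) ≤ 1 - v))
          (by linarith : (0:ℝ) ≤ 1 + v)]
      have hsv : (3/4) * v ≤ Real.sin v := by nlinarith
      have hsvnn : 0 ≤ Real.sin v := by nlinarith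
      rw [hsq]
      have hveq : (t₀ * f n) ^ 2 = v ^ 2 := (sq_abs _).symm
      rw [hveq]
      nlinarith
  have hlogbound : ∀ N : ℕ, ∑ n ∈ Finset.range N, Real.sin (t₀ * f n) ^ 2 ≤ Real.log 4 := by
    intro N
    have h4 := hprod t₀ ht₀δ N
    have hle : ∏ n ∈ Finset.range N, Real.cos (t₀ * f n) ^ 2
        ≤ Real.exp (-(∑ n ∈ Finset.range N, Real.sin (t₀ * f n) ^ 2)) := by
      rw [← Finset.sum_neg_distrib, Real.exp_sum]
      apply Finset.prod_le_prod (fun n _ => sq_nonneg _)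
      intro n _
      have h1 : Real.cos (t₀ * f n) ^ 2 = 1 - Real.sin (t₀ * f n) ^ 2 := by
        rw [Real.cos_sq']
      rw [h1]
      have := Real.add_one_le_exp (-(Real.sin (t₀ * f n) ^ 2))
      linarith
    have h14 : (1/4 : ℝ) ≤ Real.exp (-(∑ n ∈ Finset.range N, Real.sin (t₀ * f n) ^ 2)) :=
      le_trans h4 hle
    have := Real.log_le_log (by norm_num) h14
    rw [Real.log_exp] at this
    have hlog : Real.log (1/4) = - Real.log 4 := by
      rw [one_div, Real.log_inv]
    linarith [hlog ▸ this]
  -- conclude summability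
  apply summable_of_sum_range_le (c := (16/9) / t₀ ^ 2 * Real.log 4)
    (fun n => sq_nonneg _)
  intro N
  have h1 : ∑ n ∈ Finset.range N, (9/16 : ℝ) * (t₀ * f n) ^ 2 ≤ Real.log 4 :=
    le_trans (Finset.sum_le_sum fun n _ => hsin n) (hlogbound N)
  have h2 : ∑ n ∈ Finset.range N, (9/16 : ℝ) * (t₀ * f n) ^ 2
      = (9/16) * t₀ ^ 2 * ∑ n ∈ Finset.range N, f n ^ 2 := by
    rw [Finset.mul_sum]
    congr 1
    funext n
    ring
  have h3 : ∑ n ∈ Finset.range N, f n ^ 2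
      = ((16/9) / t₀ ^ 2) * ((9/16) * t₀ ^ 2 * ∑ n ∈ Finset.range N, f n ^ 2) := by
    field_simp
  rw [h3]
  apply mul_le_mul_of_nonneg_left _ (by positivity)
  rw [← h2]
  exact h1

lemma bern_ae_conv_of_summable
    (hIndep : ProbabilityTheory.iIndepFun
      (fun n => fun x : ℕ → ℝ => x n) μ)
    (hdist : ∀ n : ℕ, Measure.map (fun x : ℕ → ℝ => x n) μ
      = (2⁻¹ : ℝ≥0∞) • (Measure.dirac (-1 : ℝ) + Measure.dirac (1 : ℝ)))
    (f : ℕ → ℝ) (hsum : Summable (fun n => f n ^ 2)) :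
    ∀ᵐ x ∂μ, ∃ L : ℝ,
      Tendsto (fun N : ℕ => ∑ n ∈ Finset.range N, f n * x n) atTop (𝓝 L) := by
  classical
  set Y : ℕ → (ℕ → ℝ) → ℝ := fun n x => f n * x n with hYdef
  have hYsm : ∀ n, StronglyMeasurable (Y n) :=
    fun n => (by fun_prop : Measurable (fun x : ℕ → ℝ => f n * x n)).stronglyMeasurable
  set ℱ := Filtration.natural Y hYsm with hℱ
  have hYindep : ProbabilityTheory.iIndepFun Y μ := by
    have := hIndep.comp (fun n (y : ℝ) => f n * y) (fun n => measurable_const_mul (f n))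
    exact this
  have hYint : ∀ n, Integrable (Y n) μ := by
    intro n
    apply bern_integrable_bdd (hYsm n).aestronglyMeasurable (C := |f n|)
    filter_upwards [bern_ae_pm hdist] with x hx
    rcases hx n with h | h <;> simp [hYdef, h, abs_mul]
  have hYmean : ∀ n, ∫ x, Y n x ∂μ = 0 := by
    intro n
    simp only [hYdef]
    rw [integral_const_mul, bern_integral_coord hdist, mul_zero]
  set M : ℕ → (ℕ → ℝ) → ℝ := fun N x => ∑ n ∈ Finset.range (N + 1), Y n x with hMdef
  have hMint : ∀ N, Integrable (M N) μ :=
    fun N => integrable_finset_sum _ (fun n _ => hYint n)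
  -- martingale property
  have hadap : StronglyAdapted ℱ M := by
    intro N
    apply Finset.stronglyMeasurable_fun_sum
    intro n hn
    have hn' : n ≤ N := Nat.lt_succ_iff.mp (Finset.mem_range.mp hn)
    exact (Filtration.stronglyAdapted_natural hYsm n).mono (ℱ.mono hn')
  have hmart : Martingale M ℱ μ := by
    refine ⟨hadap, fun i j hij => ?_⟩
    have hrange : Finset.range (j + 1) = Finset.range (i + 1) ∪ Finset.Ioc i j := by
      rw [Finset.range_eq_Ico, Finset.range_eq_Ico, ← Finset.Ico_add_one_add_one_eq_Ioc]
      exact (Finset.Ico_union_Ico_eq_Ico (Nat.zero_le _) (Nat.succ_le_succ hij)).symm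
    have hdisj : Disjoint (Finset.range (i + 1)) (Finset.Ioc i j) := by
      rw [Finset.disjoint_left]
      intro k hk1 hk2
      exact absurd (Finset.mem_Ioc.mp hk2).1 (not_lt.mpr (Nat.lt_succ_iff.mp
        (Finset.mem_range.mp hk1)))
    have hsplit : M j = M i + ∑ n ∈ Finset.Ioc i j, Y n := by
      funext x
      simp only [hMdef, hrange, Pi.add_apply, Finset.sum_apply]
      rw [Finset.sum_union hdisj]
    rw [hsplit]
    have h1 := condExp_add (μ := μ) (m := ℱ i) (f := M i)
      (g := ∑ n ∈ Finset.Ioc i j, Y n) (hMint i)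
      (integrable_finset_sum' (Finset.Ioc i j) (fun n _ => hYint n))
    refine h1.trans ?_
    have h2 : μ[M i|ℱ i] =ᵐ[μ] M i := by
      rw [condExp_of_stronglyMeasurable (ℱ.le i) (hadap i) (hMint i)]
    have h3 : μ[∑ n ∈ Finset.Ioc i j, Y n|ℱ i] =ᵐ[μ] 0 := by
      refine (condExp_finset_sum (fun n _ => hYint n) _).trans ?_
      have h4 : ∀ n ∈ Finset.Ioc i j, μ[Y n|ℱ i] =ᵐ[μ] 0 := by
        intro n hn
        have hin : i < n := (Finset.mem_Ioc.mp hn).1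
        refine (ProbabilityTheory.iIndepFun.condExp_natural_ae_eq_of_lt hYsm hYindep hin).trans ?_
        rw [hYmean n]
        rfl
      calc ∑ n ∈ Finset.Ioc i j, μ[Y n|ℱ i]
          =ᵐ[μ] ∑ n ∈ Finset.Ioc i j, (0 : (ℕ → ℝ) → ℝ) := by
            apply eventuallyEq_sum
            exact h4
        _ = 0 := by simp
    filter_upwards [h2, h3] with x hx2 hx3
    simp only [Pi.add_apply] at *
    rw [hx2, hx3]
    simp
  -- second moment bound
  set B : ℝ := ∑' n, f n ^ 2 with hB
  have hsq : ∀ N, ∫ x, (M N x) ^ 2 ∂μ = ∑ n ∈ Finset.range (N + 1), f n ^ 2 := by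
    intro N
    have hexp : ∀ x, (M N x) ^ 2 = ∑ n ∈ Finset.range (N + 1),
        ∑ m ∈ Finset.range (N + 1), Y n x * Y m x := by
      intro x
      rw [sq, hMdef, Finset.sum_mul_sum]
    have hprodint : ∀ n m : ℕ, Integrable (fun x => Y n x * Y m x) μ := by
      intro n m
      apply bern_integrable_bdd ((hYsm n).mul (hYsm m)).aestronglyMeasurable
        (C := |f n| * |f m|)
      filter_upwards [bern_ae_pm hdist] with x hx
      rcases hx n with h | h <;> rcases hx m with h' | h' <;>
        simp [hYdef, h, h', abs_mul]
    have hcross : ∀ n m : ℕ, n ≠ m → ∫ x, Y n x * Y m x ∂μ = 0 := by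
      intro n m hnm
      rw [(hYindep.indepFun hnm).integral_fun_mul_eq_mul_integral (hYsm n).aestronglyMeasurable
        (hYsm m).aestronglyMeasurable, hYmean n, zero_mul]
    have hdiag : ∀ n : ℕ, ∫ x, Y n x * Y n x ∂μ = f n ^ 2 := by
      intro n
      have : (fun x : ℕ → ℝ => Y n x * Y n x) =ᵐ[μ] (fun _ => f n ^ 2) := by
        filter_upwards [bern_ae_pm hdist] with x hx
        rcases hx n with h | h <;> simp [hYdef, h] <;> ring
      rw [integral_congr_ae this]
      simp
    calc ∫ x, (M N x) ^ 2 ∂μ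
        = ∫ x, ∑ n ∈ Finset.range (N + 1), ∑ m ∈ Finset.range (N + 1), Y n x * Y m x ∂μ := by
          simp_rw [hexp]
      _ = ∑ n ∈ Finset.range (N + 1), ∑ m ∈ Finset.range (N + 1), ∫ x, Y n x * Y m x ∂μ := by
          rw [integral_finset_sum _ (fun n _ => integrable_finset_sum _
            (fun m _ => hprodint n m))]
          congr 1
          funext n
          rw [integral_finset_sum _ (fun m _ => hprodint n m)]
      _ = ∑ n ∈ Finset.range (N + 1), f n ^ 2 := by
          apply Finset.sum_congr rfl
          intro n hnmem
          rw [Finset.sum_eq_single n (fun m _ hmn => hcross n m (Ne.symm hmn))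
            (fun hn => absurd hnmem hn), hdiag n]
  -- L¹ bound
  have hBnn : 0 ≤ B := tsum_nonneg (fun n => sq_nonneg _)
  have hL1 : ∀ N, eLpNorm (M N) 1 μ ≤ ENNReal.ofReal ((1 + B) / 2) := by
    intro N
    have hsqint : Integrable (fun x => (M N x) ^ 2) μ := by
      have : (fun x => (M N x) ^ 2) = fun x => ∑ n ∈ Finset.range (N + 1),
          ∑ m ∈ Finset.range (N + 1), Y n x * Y m x := by
        funext x
        rw [sq, hMdef, Finset.sum_mul_sum]
      rw [this]
      apply integrable_finset_sum _ (fun n _ => integrable_finset_sum _ (fun m _ => ?_))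
      apply bern_integrable_bdd ((hYsm n).mul (hYsm m)).aestronglyMeasurable
        (C := |f n| * |f m|)
      filter_upwards [bern_ae_pm hdist] with x hx
      rcases hx n with h | h <;> rcases hx m with h' | h' <;>
        simp [hYdef, h, h', abs_mul]
    have habs : ∫ x, |M N x| ∂μ ≤ (1 + B) / 2 := by
      have hhalf : Integrable (fun x => (1 + (M N x) ^ 2) / 2) μ :=
        ((integrable_const (1 : ℝ)).add hsqint).div_const 2
      have h1 : ∫ x, |M N x| ∂μ ≤ ∫ x, (1 + (M N x) ^ 2) / 2 ∂μ := by
        apply integral_mono (hMint N).abs hhalf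
        intro x
        simp only
        nlinarith [sq_nonneg (|M N x| - 1), sq_abs (M N x)]
      have h2 : ∫ x, (1 + (M N x) ^ 2) / 2 ∂μ
          = (1 + ∑ n ∈ Finset.range (N + 1), f n ^ 2) / 2 := by
        rw [integral_div, integral_add (integrable_const 1) hsqint, integral_const, hsq N]
        simp
      have h3 : ∑ n ∈ Finset.range (N + 1), f n ^ 2 ≤ B :=
        Summable.sum_le_tsum _ (fun n _ => sq_nonneg _) hsum
      rw [h2] at h1
      linarith
    have heq : eLpNorm (M N) 1 μ = ENNReal.ofReal (∫ x, ‖M N x‖ ∂μ) := by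
      rw [eLpNorm_one_eq_lintegral_enorm, ← ofReal_integral_norm_eq_lintegral_enorm (hMint N)]
    rw [heq]
    apply ENNReal.ofReal_le_ofReal
    simpa [Real.norm_eq_abs] using habs
  -- conclusion via martingale convergence
  have hconv := (hmart.submartingale).exists_ae_tendsto_of_bdd hL1
  filter_upwards [hconv] with x hx
  obtain ⟨c, hc⟩ := hx
  exact ⟨c, (tendsto_add_atTop_iff_nat 1).1 hc⟩

end BernoulliAux

set_option maxHeartbeats 1000000 in
/-- For the Bernoulli product measure on `ℝ^ℕ` (coordinates i.i.d. taking values `±1`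
with probability `1/2` each), the series `Σ f n * x n` converges for almost every `x`
iff `f ∈ ℓ²`. -/
theorem bernoulli_series_converges_ae_iff_l2
    (μ : Measure (ℕ → ℝ)) [IsProbabilityMeasure μ]
    (hIndep : ProbabilityTheory.iIndepFun
      (fun n => fun x : ℕ → ℝ => x n) μ)
    (hdist : ∀ n : ℕ, Measure.map (fun x : ℕ → ℝ => x n) μ
      = (2⁻¹ : ℝ≥0∞) • (Measure.dirac (-1 : ℝ) + Measure.dirac (1 : ℝ)))
    (f : ℕ → ℝ) :
    (∀ᵐ x ∂μ, ∃ L : ℝ,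
        Tendsto (fun N : ℕ => ∑ n ∈ Finset.range N, f n * x n) atTop (𝓝 L))
      ↔ Summable (fun n => f n ^ 2) := by
  constructor
  · exact bern_summable_of_ae_conv hIndep hdist f
  · exact bern_ae_conv_of_summable hIndep hdist f
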